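/- If Π_{j=1}^∞ p_j = 0, then the transition operator S acting on l^1 has no eigenvalues: there is no λ ∈ ℂ and nonzero v ∈ l^1 with S v = λ v. -/

import Mathlib

open Filter Finset
open scoped ENNReal Topology ZeroAtInfty

noncomputable section

namespace AMFC

/-- `q d j = d 0 * d 1 * ... * d j`. -/
def q (d : ℕ → ℕ) (j : ℕ) : ℕ := ∏ i ∈ Finset.range (j + 1), d i

/-- For `j ≥ 1`, `digit d n j = ⌊n / q_{j-1}⌋ mod d_j` is the `j`-th digit of `n`
in the Cantor system of numeration. -/
def digit (d : ℕ → ℕ) (n j : ℕ) : ℕ := (n / q d (j - 1)) % d j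

/-- The counter `ζ_n = min { j ≥ 1 : a_j(n) ≠ d_j - 1 }`. -/
def zeta (d : ℕ → ℕ) (n : ℕ) : ℕ := sInf {j | 1 ≤ j ∧ digit d n j ≠ d j - 1}

open scoped Classical in
/-- The transition probabilities of the stochastic adding machine. -/
def s (d : ℕ → ℕ) (p : ℕ → ℝ) (n m : ℕ) : ℝ :=
  if m = n + 1 then ∏ j ∈ Finset.Icc 1 (zeta d n), p j
  else if m = n then 1 - p 1
  else if h : ∃ r, 1 ≤ r ∧ r + 1 ≤ zeta d n ∧
      n = m + ∑ j ∈ Finset.Icc 1 r, (d j - 1) * q d (j - 1)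
    then (1 - p (h.choose + 1)) * ∏ j ∈ Finset.Icc 1 h.choose, p j
  else 0

/-- `f j (z) = ((z - (1 - p j)) / p j) ^ (d j)`. -/
def f (d : ℕ → ℕ) (p : ℕ → ℝ) (j : ℕ) (z : ℂ) : ℂ :=
  ((z - (1 - (p j : ℂ))) / (p j : ℂ)) ^ d j

/-- `ftil j = f j ∘ ... ∘ f 1`, with `ftil 0 = id`. -/
def ftil (d : ℕ → ℕ) (p : ℕ → ℝ) : ℕ → ℂ → ℂ
  | 0 => id
  | j + 1 => f d p (j + 1) ∘ ftil d p j

/-- The fibered filled Julia set `E = {z : limsup_j |ftil j z| < ∞}`. -/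
def E (d : ℕ → ℕ) (p : ℕ → ℝ) : Set ℂ :=
  {z | Filter.limsup (fun j => (‖ftil d p j z‖₊ : ℝ≥0∞)) Filter.atTop < ⊤}

/-- `ι_λ(r) = (ftil (r-1) λ - (1 - p r)) / p r` for `r ≥ 1`. -/
def iota (d : ℕ → ℕ) (p : ℕ → ℝ) (lam : ℂ) (r : ℕ) : ℂ :=
  (ftil d p (r - 1) lam - (1 - (p r : ℂ))) / (p r : ℂ)

/-- `v_λ(n) = ∏_{r ≥ 1} ι_λ(r) ^ a_r(n)`, a finite product. -/
def vlam (d : ℕ → ℕ) (p : ℕ → ℝ) (lam : ℂ) (n : ℕ) : ℂ :=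
  ∏ᶠ r : ℕ, iota d p lam (r + 1) ^ digit d n (r + 1)

/-- The point spectrum of a continuous linear operator. -/
def pointSpectrum {M : Type*} [NormedAddCommGroup M] [NormedSpace ℂ M]
    (T : M →L[ℂ] M) : Set ℂ :=
  {lam | ∃ v, v ≠ 0 ∧ T v = lam • v}

/-- The residual spectrum: `T - λI` is injective but its range is not dense. -/
def residualSpectrum {M : Type*} [NormedAddCommGroup M] [NormedSpace ℂ M]
    (T : M →L[ℂ] M) : Set ℂ :=
  {lam | Function.Injective ⇑(T - lam • (1 : M →L[ℂ] M)) ∧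
    ¬ DenseRange ⇑(T - lam • (1 : M →L[ℂ] M))}

/-- The continuous spectrum: `T - λI` is injective with dense range, but not surjective. -/
def continuousSpectrum {M : Type*} [NormedAddCommGroup M] [NormedSpace ℂ M]
    (T : M →L[ℂ] M) : Set ℂ :=
  {lam | Function.Injective ⇑(T - lam • (1 : M →L[ℂ] M)) ∧
    DenseRange ⇑(T - lam • (1 : M →L[ℂ] M)) ∧
    Set.range ⇑(T - lam • (1 : M →L[ℂ] M)) ≠ Set.univ}

section Numeration

variable {d : ℕ → ℕ}

lemma q_succ (d : ℕ → ℕ) (j : ℕ) : q d (j + 1) = q d j * d (j + 1) :=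
  Finset.prod_range_succ d (j + 1)

lemma q_zero (hd0 : d 0 = 1) : q d 0 = 1 := by simp [q, hd0]

variable (hd0 : d 0 = 1) (hd : ∀ j, 1 ≤ j → 2 ≤ d j)
include hd0 hd

lemma q_pos (j : ℕ) : 0 < q d j := by
  induction j with
  | zero => simp [q_zero hd0, Nat.mod_one]
  | succ k ih =>
    rw [q_succ]
    exact Nat.mul_pos ih (by have := hd (k + 1) (by omega); omega)

lemma q_lt_succ (j : ℕ) : q d j < q d (j + 1) := by
  have h2 := hd (j + 1) (by omega)
  have h1 := q_pos hd0 hd j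
  rw [q_succ]; nlinarith

lemma q_strictMono : StrictMono (q d) :=
  strictMono_nat_of_lt_succ (q_lt_succ hd0 hd)

lemma lt_q (n : ℕ) : n < q d n := by
  induction n with
  | zero => simp [q_zero hd0, Nat.mod_one]
  | succ k ih =>
    have h2 := hd (k + 1) (by omega)
    have h1 := q_pos hd0 hd k
    rw [q_succ]; nlinarith

omit hd0 hd in
lemma q_dvd {j k : ℕ} (h : j ≤ k) : q d j ∣ q d k :=
  Finset.prod_dvd_prod_of_subset _ _ d (Finset.range_subset_range.2 (by omega))

lemma digit_eq_zero_of_dvd {m j k : ℕ} (hj : 1 ≤ j) (hjk : j ≤ k)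
    (hdvd : q d k ∣ m) : digit d m j = 0 := by
  obtain ⟨i, rfl⟩ : ∃ i, j = i + 1 := ⟨j - 1, by omega⟩
  obtain ⟨t, ht⟩ : q d (i + 1) ∣ m := (q_dvd hjk).trans hdvd
  have hm : m = q d i * (d (i + 1) * t) := by rw [ht, q_succ]; ring
  unfold digit
  simp only [Nat.add_sub_cancel]
  rw [hm, Nat.mul_div_cancel_left _ (q_pos hd0 hd i), Nat.mul_mod_right]

omit hd0 hd in
lemma digit_eq_zero_of_lt {m j : ℕ} (h : m < q d (j - 1)) : digit d m j = 0 := by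
  unfold digit; rw [Nat.div_eq_of_lt h, Nat.zero_mod]

lemma digit_eq_zero_of_le {n r : ℕ} (h : n ≤ r) : digit d n (r + 1) = 0 := by
  apply digit_eq_zero_of_lt
  simpa using lt_of_le_of_lt h (lt_q hd0 hd r)

lemma zeta_spec (n : ℕ) :
    1 ≤ zeta d n ∧ digit d n (zeta d n) ≠ d (zeta d n) - 1 := by
  have hne : {j | 1 ≤ j ∧ digit d n j ≠ d j - 1}.Nonempty := by
    refine ⟨n + 1, by simp, ?_⟩
    rw [digit_eq_zero_of_le hd0 hd le_rfl]
    have := hd (n + 1) (by omega); omega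
  exact Nat.sInf_mem hne

omit hd0 hd in
lemma digit_of_lt_zeta {n j : ℕ} (h1 : 1 ≤ j) (h2 : j < zeta d n) :
    digit d n j = d j - 1 := by
  by_contra hne
  exact Nat.notMem_of_lt_sInf h2 ⟨h1, hne⟩

lemma mod_eq_of_digits_max {n k : ℕ}
    (h : ∀ j, 1 ≤ j → j ≤ k → digit d n j = d j - 1) :
    n % q d k = q d k - 1 := by
  induction k with
  | zero => simp [q_zero hd0, Nat.mod_one]
  | succ k ih =>
    have hk := ih fun j hj hjk => h j hj (by omega)
    have hdig : n / q d k % d (k + 1) = d (k + 1) - 1 := by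
      have := h (k + 1) (by omega) le_rfl
      simpa [digit] using this
    have h2 := hd (k + 1) (by omega)
    have h1 := q_pos hd0 hd k
    rw [q_succ, Nat.mod_mul, hk, hdig]
    obtain ⟨e, he⟩ : ∃ e, d (k + 1) = e + 2 := ⟨d (k + 1) - 2, by omega⟩
    rw [he]
    have e1 : q d k * (e + 2 - 1) = q d k * e + q d k := by rw [show e + 2 - 1 = e + 1 from rfl]; ring
    have e2 : q d k * (e + 2) = q d k * e + 2 * q d k := by ring
    omega

lemma sum_carry (r : ℕ) :
    ∑ j ∈ Finset.Icc 1 r, (d j - 1) * q d (j - 1) = q d r - 1 := by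
  induction r with
  | zero => simp [q_zero hd0]
  | succ r ih =>
    rw [Finset.sum_Icc_succ_top (by omega), ih]
    simp only [Nat.add_sub_cancel]
    have h2 := hd (r + 1) (by omega)
    have h1 := q_pos hd0 hd r
    rw [q_succ]
    obtain ⟨e, he⟩ : ∃ e, d (r + 1) = e + 2 := ⟨d (r + 1) - 2, by omega⟩
    rw [he]
    have e1 : (e + 2 - 1) * q d r = e * q d r + q d r := by rw [show e + 2 - 1 = e + 1 from rfl]; ring
    have e2 : q d r * (e + 2) = e * q d r + 2 * q d r := by ring
    omega

end Numeration
section Carry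

variable {d : ℕ → ℕ}
variable (hd0 : d 0 = 1) (hd : ∀ j, 1 ≤ j → 2 ≤ d j)
include hd0 hd

/-- `n % q d (zeta d n - 1) = q d (zeta d n - 1) - 1`. -/
lemma mod_zeta (n : ℕ) : n % q d (zeta d n - 1) = q d (zeta d n - 1) - 1 :=
  mod_eq_of_digits_max hd0 hd fun j hj hjk =>
    digit_of_lt_zeta hj (by have := (zeta_spec hd0 hd n).1; omega)

lemma dvd_succ_of_zeta (n : ℕ) : q d (zeta d n - 1) ∣ n + 1 := by
  have h1 := q_pos hd0 hd (zeta d n - 1)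
  have h2 := mod_zeta hd0 hd n
  have h3 := Nat.div_add_mod n (q d (zeta d n - 1))
  refine ⟨n / q d (zeta d n - 1) + 1, ?_⟩
  rw [Nat.mul_succ]; omega

lemma digit_zeta_lt (n : ℕ) : digit d n (zeta d n) + 1 < d (zeta d n) := by
  have h1 := (zeta_spec hd0 hd n).2
  have h2 := hd (zeta d n) (zeta_spec hd0 hd n).1
  have h3 : digit d n (zeta d n) < d (zeta d n) := Nat.mod_lt _ (by omega)
  omega

lemma digit_succ_lt {n j : ℕ} (h1 : 1 ≤ j) (h2 : j < zeta d n) :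
    digit d (n + 1) j = 0 :=
  digit_eq_zero_of_dvd hd0 hd h1 (by omega) (dvd_succ_of_zeta hd0 hd n)

lemma div_succ_zeta (n : ℕ) :
    (n + 1) / q d (zeta d n - 1) = n / q d (zeta d n - 1) + 1 := by
  rw [Nat.succ_div, if_pos (dvd_succ_of_zeta hd0 hd n)]

lemma digit_succ_zeta (n : ℕ) :
    digit d (n + 1) (zeta d n) = digit d n (zeta d n) + 1 := by
  have hlt := digit_zeta_lt hd0 hd n
  have hxd := Nat.div_add_mod (n / q d (zeta d n - 1)) (d (zeta d n))
  unfold digit at hlt ⊢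
  rw [div_succ_zeta hd0 hd n]
  have hrw : n / q d (zeta d n - 1) + 1
      = (n / q d (zeta d n - 1) % d (zeta d n) + 1)
        + d (zeta d n) * (n / q d (zeta d n - 1) / d (zeta d n)) := by omega
  rw [hrw, Nat.add_mul_mod_self_left, Nat.mod_eq_of_lt (by omega)]

lemma not_dvd_succ_high {n j : ℕ} (h : zeta d n < j) : ¬ q d (j - 1) ∣ n + 1 := by
  intro hdvd
  have hk1 := (zeta_spec hd0 hd n).1
  obtain ⟨t, ht⟩ : q d (zeta d n) ∣ n + 1 := (q_dvd (by omega)).trans hdvd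
  have hqq : q d (zeta d n) = q d (zeta d n - 1) * d (zeta d n) := by
    conv_lhs => rw [show zeta d n = (zeta d n - 1) + 1 by omega, q_succ]
    rw [show zeta d n - 1 + 1 = zeta d n by omega]
  have hdiv : (n + 1) / q d (zeta d n - 1) = d (zeta d n) * t := by
    rw [ht, hqq, mul_assoc, Nat.mul_div_cancel_left _ (q_pos hd0 hd _)]
  have hdiv2 := div_succ_zeta hd0 hd n
  have hlt := digit_zeta_lt hd0 hd n
  unfold digit at hlt
  have hmul : (d (zeta d n) * t) % d (zeta d n) = 0 := Nat.mul_mod_right _ _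
  have hxd := Nat.div_add_mod (n / q d (zeta d n - 1)) (d (zeta d n))
  have h2 : (n / q d (zeta d n - 1) + 1) % d (zeta d n)
      = n / q d (zeta d n - 1) % d (zeta d n) + 1 := by
    have hrw : n / q d (zeta d n - 1) + 1
        = (n / q d (zeta d n - 1) % d (zeta d n) + 1)
          + d (zeta d n) * (n / q d (zeta d n - 1) / d (zeta d n)) := by omega
    rw [hrw, Nat.add_mul_mod_self_left, Nat.mod_eq_of_lt (by omega)]
  have h3 : n / q d (zeta d n - 1) + 1 = d (zeta d n) * t := by omega
  rw [h3, hmul] at h2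
  omega

lemma digit_succ_high {n j : ℕ} (h : zeta d n < j) :
    digit d (n + 1) j = digit d n j := by
  unfold digit
  rw [Nat.succ_div, if_neg (not_dvd_succ_high hd0 hd h), Nat.add_zero]

/-- digits of `n - (q d r - 1)` for `1 ≤ r < zeta d n`. -/
lemma mod_r (n : ℕ) {r : ℕ} (h2 : r < zeta d n) :
    n % q d r = q d r - 1 :=
  mod_eq_of_digits_max hd0 hd fun j hj hjr =>
    digit_of_lt_zeta hj (by omega)

lemma sub_mul_form (n : ℕ) {r : ℕ} (h2 : r < zeta d n) :
    n - (q d r - 1) = q d r * (n / q d r) := by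
  have h1 := q_pos hd0 hd r
  have h3 := mod_r hd0 hd n h2
  have h4 := Nat.div_add_mod n (q d r)
  omega

lemma sub_le (n : ℕ) {r : ℕ} (h2 : r < zeta d n) : q d r - 1 ≤ n := by
  have h3 := mod_r hd0 hd n h2
  have := Nat.mod_le n (q d r)
  omega

lemma digit_sub_low {n r j : ℕ} (h1 : 1 ≤ j) (hjr : j ≤ r) (h2 : r < zeta d n) :
    digit d (n - (q d r - 1)) j = 0 := by
  apply digit_eq_zero_of_dvd hd0 hd h1 hjr
  rw [sub_mul_form hd0 hd n h2]
  exact Dvd.intro _ rfl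

lemma digit_sub_high {n r j : ℕ} (hrj : r < j) (h2 : r < zeta d n) :
    digit d (n - (q d r - 1)) j = digit d n j := by
  unfold digit
  obtain ⟨u, hu⟩ : q d r ∣ q d (j - 1) := q_dvd (by omega)
  rw [sub_mul_form hd0 hd n h2, hu, Nat.mul_div_mul_left _ _ (q_pos hd0 hd r),
    ← Nat.div_div_eq_div_mul]

end Carry
section Vlam

variable {d : ℕ → ℕ} {p : ℕ → ℝ} {lam : ℂ}
variable (hd0 : d 0 = 1) (hd : ∀ j, 1 ≤ j → 2 ≤ d j)
include hd0 hd

lemma vlam_eq_prod (p : ℕ → ℝ) (lam : ℂ) {n N : ℕ} (hN : n ≤ N) :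
    vlam d p lam n
      = ∏ r ∈ Finset.range N, iota d p lam (r + 1) ^ digit d n (r + 1) := by
  refine finprod_eq_prod_of_mulSupport_subset _ fun r hr => ?_
  rw [Function.mem_mulSupport] at hr
  simp only [Finset.coe_range, Set.mem_Iio]
  by_contra hrN
  push_neg at hrN
  exact hr (by rw [digit_eq_zero_of_le hd0 hd (le_trans hN hrN), pow_zero])

lemma vlam_zero (p : ℕ → ℝ) (lam : ℂ) : vlam d p lam 0 = 1 := by
  rw [vlam_eq_prod hd0 hd p lam (le_refl 0), Finset.range_zero, Finset.prod_empty]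

lemma vlam_mul {m m' j e : ℕ} (hj : 1 ≤ j)
    (hagree : ∀ r, 1 ≤ r → r ≠ j → digit d m r = digit d m' r)
    (hdig : digit d m j = digit d m' j + e) :
    vlam d p lam m = iota d p lam j ^ e * vlam d p lam m' := by
  have hjN : j - 1 ∈ Finset.range (m + m' + j) := by
    simp only [Finset.mem_range]; omega
  rw [vlam_eq_prod hd0 hd p lam (show m ≤ m + m' + j by omega),
      vlam_eq_prod hd0 hd p lam (show m' ≤ m + m' + j by omega),
      ← Finset.mul_prod_erase _ _ hjN, ← Finset.mul_prod_erase _ _ hjN]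
  have hrest : ∏ r ∈ (Finset.range (m + m' + j)).erase (j - 1),
        iota d p lam (r + 1) ^ digit d m (r + 1)
      = ∏ r ∈ (Finset.range (m + m' + j)).erase (j - 1),
        iota d p lam (r + 1) ^ digit d m' (r + 1) := by
    refine Finset.prod_congr rfl fun r hr => ?_
    have hrj : r ≠ j - 1 := (Finset.mem_erase.1 hr).1
    rw [hagree (r + 1) (by omega) (by omega)]
  rw [hrest, show j - 1 + 1 = j by omega, hdig, pow_add]
  ring

end Vlam

section Iota

variable {d : ℕ → ℕ} {p : ℕ → ℝ}

lemma ftil_succ_eq (p : ℕ → ℝ) (j : ℕ) (lam : ℂ) :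
    ftil d p (j + 1) lam = iota d p lam (j + 1) ^ d (j + 1) := by
  rw [show ftil d p (j + 1) lam = f d p (j + 1) (ftil d p j lam) from rfl, f, iota]
  simp only [Nat.add_sub_cancel]

lemma iota_rec (hp : ∀ j, 1 ≤ j → p j ∈ Set.Ioc (0:ℝ) 1) (r : ℕ) (lam : ℂ) :
    (p (r + 1) : ℂ) * iota d p lam (r + 1)
      = ftil d p r lam - (1 - (p (r + 1) : ℂ)) := by
  have hp0 : (p (r + 1) : ℂ) ≠ 0 := by
    exact_mod_cast ne_of_gt (hp (r + 1) (by omega)).1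
  rw [iota]
  simp only [Nat.add_sub_cancel]
  field_simp

lemma iota_pow (hp : ∀ j, 1 ≤ j → p j ∈ Set.Ioc (0:ℝ) 1) {r : ℕ} (hr : 1 ≤ r) (lam : ℂ) :
    iota d p lam r ^ d r
      = (p (r + 1) : ℂ) * iota d p lam (r + 1) + (1 - (p (r + 1) : ℂ)) := by
  rw [iota_rec hp r lam]
  have h : ftil d p r lam = iota d p lam r ^ d r := by
    obtain ⟨i, rfl⟩ : ∃ i, r = i + 1 := ⟨r - 1, by omega⟩
    exact ftil_succ_eq p i lam
  rw [h]; ring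

end Iota

section Key

variable {d : ℕ → ℕ} {p : ℕ → ℝ}
variable (hd0 : d 0 = 1) (hd : ∀ j, 1 ≤ j → 2 ≤ d j)
    (hp : ∀ j, 1 ≤ j → p j ∈ Set.Ioc (0:ℝ) 1)
include hd0 hd hp

lemma key_aux (lam : ℂ) (n : ℕ) {t : ℕ} (ht : t ≤ zeta d n - 1) :
    (lam - (1 - (p 1 : ℂ))) * vlam d p lam n
      = (∑ r ∈ Finset.Icc 1 t, ((1 - (p (r + 1) : ℂ)) * ∏ j ∈ Finset.Icc 1 r, (p j : ℂ))
            * vlam d p lam (n - (q d r - 1)))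
        + (∏ j ∈ Finset.Icc 1 (t + 1), (p j : ℂ)) * iota d p lam (t + 1)
            * vlam d p lam (n - (q d t - 1)) := by
  have hk1 := (zeta_spec hd0 hd n).1
  induction t with
  | zero =>
    rw [Finset.Icc_eq_empty (by omega), Finset.sum_empty, zero_add,
        q_zero hd0, Finset.Icc_self, Finset.prod_singleton]
    norm_num
    have hrec := iota_rec (d := d) hp 0 lam
    rw [show ftil d p 0 lam = lam from rfl] at hrec
    norm_num at hrec
    rw [← hrec]
    exact Or.inl rfl
  | succ t ih =>
    have ht' : t ≤ zeta d n - 1 := by omega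
    have htz : t + 1 < zeta d n := by omega
    rw [ih ht']
    have hv : vlam d p lam (n - (q d t - 1))
        = iota d p lam (t + 1) ^ (d (t + 1) - 1)
            * vlam d p lam (n - (q d (t + 1) - 1)) := by
      apply vlam_mul hd0 hd (by omega)
      · intro r hr1 hrj
        rcases lt_or_gt_of_ne hrj with hlt | hgt
        · rw [digit_sub_low hd0 hd hr1 (by omega) (by omega),
              digit_sub_low hd0 hd hr1 (by omega) (by omega)]
        · rw [digit_sub_high hd0 hd (show t < r by omega) (by omega),
              digit_sub_high hd0 hd (show t + 1 < r by omega) (by omega)]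
      · rw [digit_sub_high hd0 hd (show t < t + 1 by omega) (by omega),
            digit_sub_low hd0 hd (by omega) le_rfl (by omega),
            digit_of_lt_zeta (by omega) htz]
        omega
    rw [hv]
    have hpow : iota d p lam (t + 1) * iota d p lam (t + 1) ^ (d (t + 1) - 1)
        = iota d p lam (t + 1) ^ d (t + 1) := by
      rw [← pow_succ']
      congr 1
      have := hd (t + 1) (by omega); omega
    have hrec2 : iota d p lam (t + 1) * iota d p lam (t + 1) ^ (d (t + 1) - 1)
        = (p (t + 1 + 1) : ℂ) * iota d p lam (t + 1 + 1)
            + (1 - (p (t + 1 + 1) : ℂ)) := by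
      rw [hpow]; exact iota_pow (d := d) hp (by omega) lam
    have hP : ∏ j ∈ Finset.Icc 1 (t + 1 + 1), (p j : ℂ)
        = (∏ j ∈ Finset.Icc 1 (t + 1), (p j : ℂ)) * (p (t + 1 + 1) : ℂ) :=
      Finset.prod_Icc_succ_top (by omega) _
    rw [Finset.sum_Icc_succ_top (show 1 ≤ t + 1 by omega), hP]
    linear_combination (∏ j ∈ Finset.Icc 1 (t + 1), (p j : ℂ))
      * vlam d p lam (n - (q d (t + 1) - 1)) * hrec2

lemma key_identity (lam : ℂ) (n : ℕ) :
    lam * vlam d p lam n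
      = (1 - (p 1 : ℂ)) * vlam d p lam n
        + (∏ j ∈ Finset.Icc 1 (zeta d n), (p j : ℂ)) * vlam d p lam (n + 1)
        + ∑ r ∈ Finset.Icc 1 (zeta d n - 1),
            ((1 - (p (r + 1) : ℂ)) * ∏ j ∈ Finset.Icc 1 r, (p j : ℂ))
              * vlam d p lam (n - (q d r - 1)) := by
  have hk1 := (zeta_spec hd0 hd n).1
  have haux := key_aux hd0 hd hp lam n (le_refl (zeta d n - 1))
  rw [show zeta d n - 1 + 1 = zeta d n by omega] at haux
  have hv : vlam d p lam (n + 1)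
      = iota d p lam (zeta d n) * vlam d p lam (n - (q d (zeta d n - 1) - 1)) := by
    have h := vlam_mul hd0 hd (p := p) (lam := lam) (m := n + 1)
      (m' := n - (q d (zeta d n - 1) - 1)) (j := zeta d n) (e := 1) hk1
      (fun r hr1 hrj => by
        rcases lt_or_gt_of_ne hrj with hlt | hgt
        · rw [digit_succ_lt hd0 hd hr1 hlt,
              digit_sub_low hd0 hd hr1 (by omega) (show zeta d n - 1 < zeta d n by omega)]
        · rw [digit_succ_high hd0 hd hgt,
              digit_sub_high hd0 hd (show zeta d n - 1 < r by omega)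
                (show zeta d n - 1 < zeta d n by omega)])
      (by rw [digit_succ_zeta hd0 hd n,
              digit_sub_high hd0 hd (show zeta d n - 1 < zeta d n by omega)
                (show zeta d n - 1 < zeta d n by omega)])
    simpa using h
  rw [hv]
  linear_combination haux

end Key
section Stsum

variable {d : ℕ → ℕ} {p : ℕ → ℝ}
variable (hd0 : d 0 = 1) (hd : ∀ j, 1 ≤ j → 2 ≤ d j)
include hd0 hd

lemma q_ge_two {r : ℕ} (hr : 1 ≤ r) : 2 ≤ q d r := by
  have h := q_strictMono hd0 hd (show (0 : ℕ) < r from hr)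
  rw [q_zero hd0] at h
  omega

lemma s_mul_tsum (n : ℕ) (w : ℕ → ℂ) :
    ∑' m : ℕ, (s d p n m : ℂ) * w m
      = (1 - (p 1 : ℂ)) * w n
        + (∏ j ∈ Finset.Icc 1 (zeta d n), (p j : ℂ)) * w (n + 1)
        + ∑ r ∈ Finset.Icc 1 (zeta d n - 1),
            ((1 - (p (r + 1) : ℂ)) * ∏ j ∈ Finset.Icc 1 r, (p j : ℂ))
              * w (n - (q d r - 1)) := by
  classical
  set F : Finset ℕ :=
    insert (n + 1) (insert n
      ((Finset.Icc 1 (zeta d n - 1)).image fun r => n - (q d r - 1))) with hF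
  have hsub : ∀ r, r ∈ Finset.Icc 1 (zeta d n - 1) →
      2 ≤ q d r ∧ q d r - 1 ≤ n ∧ r < zeta d n := by
    intro r hr
    rw [Finset.mem_Icc] at hr
    have hk1 := (zeta_spec hd0 hd n).1
    have h1 : r < zeta d n := by omega
    exact ⟨q_ge_two hd0 hd (by omega), sub_le hd0 hd n h1, h1⟩
  have hzero : ∀ m, m ∉ F → (s d p n m : ℂ) * w m = 0 := by
    intro m hm
    simp only [hF, Finset.mem_insert, not_or] at hm
    obtain ⟨h1, h2, h3⟩ := hm
    have h4 : ¬ ∃ r, 1 ≤ r ∧ r + 1 ≤ zeta d n ∧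
        n = m + ∑ j ∈ Finset.Icc 1 r, (d j - 1) * q d (j - 1) := by
      rintro ⟨r, hr1, hr2, hr3⟩
      rw [sum_carry hd0 hd r] at hr3
      apply h3
      rw [Finset.mem_image]
      exact ⟨r, Finset.mem_Icc.2 ⟨hr1, by omega⟩, by omega⟩
    rw [s, if_neg h1, if_neg h2, dif_neg h4]
    simp
  rw [tsum_eq_sum hzero]
  have hn1 : (n + 1) ∉ insert n
      ((Finset.Icc 1 (zeta d n - 1)).image fun r => n - (q d r - 1)) := by
    simp only [Finset.mem_insert, Finset.mem_image, not_or, not_exists]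
    constructor
    · omega
    · intro r
      rintro ⟨hr, heq⟩
      obtain ⟨hq2, hqn, _⟩ := hsub r hr
      omega
  have hn2 : n ∉ (Finset.Icc 1 (zeta d n - 1)).image fun r => n - (q d r - 1) := by
    simp only [Finset.mem_image, not_exists]
    intro r
    rintro ⟨hr, heq⟩
    obtain ⟨hq2, hqn, _⟩ := hsub r hr
    omega
  rw [hF, Finset.sum_insert hn1, Finset.sum_insert hn2,
    Finset.sum_image (fun r hr r' hr' heq => by
      obtain ⟨hq2, hqn, _⟩ := hsub r hr
      obtain ⟨hq2', hqn', _⟩ := hsub r' hr'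
      have : q d r = q d r' := by omega
      exact (q_strictMono hd0 hd).injective this)]
  have hs1 : (s d p n (n + 1) : ℂ) = ∏ j ∈ Finset.Icc 1 (zeta d n), (p j : ℂ) := by
    rw [s, if_pos rfl]
    push_cast
    rfl
  have hs2 : (s d p n n : ℂ) = 1 - (p 1 : ℂ) := by
    rw [s, if_neg (by omega), if_pos rfl]
    push_cast
    rfl
  have hs3 : ∀ r ∈ Finset.Icc 1 (zeta d n - 1),
      (s d p n (n - (q d r - 1)) : ℂ) * w (n - (q d r - 1))
        = ((1 - (p (r + 1) : ℂ)) * ∏ j ∈ Finset.Icc 1 r, (p j : ℂ))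
            * w (n - (q d r - 1)) := by
    intro r hr
    obtain ⟨hq2, hqn, hrz⟩ := hsub r hr
    have hr1 : 1 ≤ r := (Finset.mem_Icc.1 hr).1
    have hmne1 : n - (q d r - 1) ≠ n + 1 := by omega
    have hmne2 : n - (q d r - 1) ≠ n := by omega
    have hex : ∃ r', 1 ≤ r' ∧ r' + 1 ≤ zeta d n ∧
        n = (n - (q d r - 1)) + ∑ j ∈ Finset.Icc 1 r', (d j - 1) * q d (j - 1) :=
      ⟨r, hr1, by omega, by rw [sum_carry hd0 hd]; omega⟩
    rw [s, if_neg hmne1, if_neg hmne2, dif_pos hex]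
    obtain ⟨hc1, hc2, hc3⟩ := hex.choose_spec
    rw [sum_carry hd0 hd] at hc3
    have hq : q d hex.choose = q d r := by
      have hp1 := q_pos hd0 hd hex.choose
      have hp2 := q_pos hd0 hd r
      omega
    have hcr : hex.choose = r := (q_strictMono hd0 hd).injective hq
    rw [hcr]
    push_cast
    ring
  rw [hs1, hs2, Finset.sum_congr rfl hs3]
  ring

end Stsum
section Final

lemma one_sub_sum_le_prod {F : Finset ℕ} {x : ℕ → ℝ}
    (h0 : ∀ j ∈ F, 0 ≤ x j) (h1 : ∀ j ∈ F, x j ≤ 1) :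
    1 - ∑ j ∈ F, x j ≤ ∏ j ∈ F, (1 - x j) := by
  classical
  induction F using Finset.cons_induction_on with
  | empty => simp
  | cons _ _ ha ih =>
    rename_i a F
    rw [Finset.prod_cons, Finset.sum_cons]
    have hmem : ∀ j ∈ F, j ∈ Finset.cons a F ha := fun j hj =>
      Finset.mem_cons_of_mem hj
    have hP := ih (fun j hj => h0 j (hmem j hj)) (fun j hj => h1 j (hmem j hj))
    have hprodnn : 0 ≤ ∏ j ∈ F, (1 - x j) :=
      Finset.prod_nonneg fun j hj => by linarith [h1 j (hmem j hj)]
    have hS : 0 ≤ ∑ j ∈ F, x j :=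
      Finset.sum_nonneg fun j hj => h0 j (hmem j hj)
    have hxa0 := h0 a (Finset.mem_cons_self a F)
    have hxa1 := h1 a (Finset.mem_cons_self a F)
    nlinarith [mul_le_mul_of_nonneg_left hP (by linarith : (0:ℝ) ≤ 1 - x a),
      mul_nonneg hxa0 hS]

variable {d : ℕ → ℕ} {p : ℕ → ℝ}

lemma no_eig_contra (hd0 : d 0 = 1) (hd : ∀ j, 1 ≤ j → 2 ≤ d j)
    (hp : ∀ j, 1 ≤ j → p j ∈ Set.Ioc (0 : ℝ) 1)
    (hprod : Filter.Tendsto (fun n => ∏ j ∈ Finset.Icc 1 n, p j)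
      Filter.atTop (nhds (0 : ℝ)))
    (lam : ℂ)
    (hsumi : Summable fun r : ℕ => ‖iota d p lam (r + 1)‖) : False := by
  classical
  set c : ℕ → ℝ := fun r => min ‖iota d p lam r‖ 1 with hc_def
  have hcnn : ∀ r, 0 ≤ c r := fun r => le_min (norm_nonneg _) zero_le_one
  have hcsum : Summable fun r => c (r + 1) :=
    Summable.of_nonneg_of_le (fun r => hcnn _) (fun r => min_le_left _ _) hsumi
  have hkey : ∀ r : ℕ, 1 ≤ r → 1 - p (r + 1) ≤ c r + c (r + 1) := by
    intro r hr
    have hrec := iota_pow (d := d) hp hr lam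
    have hpr := hp (r + 1) (by omega)
    have hnorm : 1 - p (r + 1)
        ≤ ‖iota d p lam r‖ ^ d r + p (r + 1) * ‖iota d p lam (r + 1)‖ := by
      have heq : ((1 : ℂ) - (p (r + 1) : ℂ))
          = iota d p lam r ^ d r - (p (r + 1) : ℂ) * iota d p lam (r + 1) := by
        linear_combination -hrec
      calc 1 - p (r + 1) = ‖(1 : ℂ) - (p (r + 1) : ℂ)‖ := by
            rw [show ((1 : ℂ) - (p (r + 1) : ℂ)) = ((1 - p (r + 1) : ℝ) : ℂ) by
                push_cast; ring,
              Complex.norm_real, Real.norm_eq_abs, abs_of_nonneg (by linarith [hpr.2])]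
        _ = ‖iota d p lam r ^ d r - (p (r + 1) : ℂ) * iota d p lam (r + 1)‖ := by
            rw [heq]
        _ ≤ ‖iota d p lam r ^ d r‖ + ‖(p (r + 1) : ℂ) * iota d p lam (r + 1)‖ :=
            norm_sub_le _ _
        _ = ‖iota d p lam r‖ ^ d r + p (r + 1) * ‖iota d p lam (r + 1)‖ := by
            rw [norm_pow, norm_mul, Complex.norm_real, Real.norm_eq_abs,
              abs_of_nonneg (le_of_lt hpr.1)]
    rcases le_or_gt ‖iota d p lam r‖ 1 with h1 | h1
    · have hpowle : ‖iota d p lam r‖ ^ d r ≤ ‖iota d p lam r‖ :=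
        pow_le_of_le_one (norm_nonneg _) h1 (by have := hd r hr; omega)
      rcases le_or_gt ‖iota d p lam (r + 1)‖ 1 with h2 | h2
      · have e1 : c r = ‖iota d p lam r‖ := min_eq_left h1
        have e2 : c (r + 1) = ‖iota d p lam (r + 1)‖ := min_eq_left h2
        have hmul : p (r + 1) * ‖iota d p lam (r + 1)‖ ≤ ‖iota d p lam (r + 1)‖ :=
          mul_le_of_le_one_left (norm_nonneg _) hpr.2
        rw [e1, e2]
        linarith
      · have e2 : c (r + 1) = 1 := min_eq_right (le_of_lt h2)
        have := hcnn r
        rw [e2]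
        linarith [hpr.1]
    · have e1 : c r = 1 := min_eq_right (le_of_lt h1)
      have := hcnn (r + 1)
      rw [e1]
      linarith [hpr.1]
  set u : ℕ → ℝ := fun j => if 2 ≤ j then 1 - p j else 0 with hu_def
  have hunn : ∀ j, 0 ≤ u j := by
    intro j
    simp only [hu_def]
    split
    · rename_i hj
      have := (hp j (by omega)).2
      linarith
    · exact le_rfl
  have hcsum2 : Summable fun n => c (n + 1 + 1) := (summable_nat_add_iff 1).2 hcsum
  have husum : Summable u := by
    rw [← summable_nat_add_iff 2]
    refine Summable.of_nonneg_of_le (fun n => hunn _) (fun n => ?_) (hcsum.add hcsum2)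
    have : u (n + 2) = 1 - p (n + 2) := if_pos (by omega)
    rw [this]
    exact hkey (n + 1) (by omega)
  have hten : Filter.Tendsto (fun m => ∑ j ∈ Finset.range m, u j)
      Filter.atTop (nhds (∑' j, u j)) := husum.hasSum.tendsto_sum_nat
  have hbound : ∀ m, ∑ j ∈ Finset.range m, u j ≤ ∑' j, u j := fun m =>
    husum.sum_le_tsum (Finset.range m) (fun j _ => hunn j)
  obtain ⟨R0, hR0⟩ : ∃ R0, ∑' j, u j - 1 / 2 ≤ ∑ j ∈ Finset.range R0, u j :=
    (hten.eventually (eventually_ge_nhds (by linarith))).exists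
  set R := max R0 2 with hR_def
  have hR2 : 2 ≤ R := le_max_right _ _
  have hA : 0 < ∏ j ∈ Finset.Icc 1 (R - 1), p j :=
    Finset.prod_pos fun j hj => (hp j (Finset.mem_Icc.1 hj).1).1
  have hev : ∀ n, n ≥ R →
      (∏ j ∈ Finset.Icc 1 (R - 1), p j) * (1 / 2) ≤ ∏ j ∈ Finset.Icc 1 n, p j := by
    intro n hn
    have hsplit : ∏ j ∈ Finset.Icc 1 n, p j
        = (∏ j ∈ Finset.Icc 1 (R - 1), p j) * ∏ j ∈ Finset.Icc R n, p j := by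
      have e1 : Finset.Icc 1 n = Finset.Ioc 0 n := Finset.Icc_add_one_left_eq_Ioc 0 n
      have e2 : Finset.Icc 1 (R - 1) = Finset.Ioc 0 (R - 1) :=
        Finset.Icc_add_one_left_eq_Ioc 0 (R - 1)
      have e3 : Finset.Icc R n = Finset.Ioc (R - 1) n := by
        rw [← Finset.Icc_add_one_left_eq_Ioc]
        congr 1
        omega
      rw [e1, e2, e3, Finset.prod_Ioc_consecutive _ (by omega) (by omega)]
    have htail : ∑ j ∈ Finset.Icc R n, (1 - p j) ≤ 1 / 2 := by
      have h1 : ∑ j ∈ Finset.Icc R n, (1 - p j) = ∑ j ∈ Finset.Icc R n, u j :=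
        Finset.sum_congr rfl fun j hj => by
          have h2j : 2 ≤ j := le_trans hR2 (Finset.mem_Icc.1 hj).1
          simp only [hu_def]
          rw [if_pos h2j]
      have h2 : Finset.Icc R n = Finset.Ico R (n + 1) := (Finset.Ico_add_one_right_eq_Icc R n).symm
      rw [h1, h2, Finset.sum_Ico_eq_sub _ (by omega)]
      have h3 : ∑ j ∈ Finset.range R0, u j ≤ ∑ j ∈ Finset.range R, u j :=
        Finset.sum_le_sum_of_subset_of_nonneg
          (Finset.range_subset_range.2 (le_max_left _ _)) (fun j _ _ => hunn j)
      have h4 := hbound (n + 1)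
      linarith
    have hw := one_sub_sum_le_prod (F := Finset.Icc R n) (x := fun j => 1 - p j)
      (fun j hj => by
        have hj1 : 1 ≤ j := by have := (Finset.mem_Icc.1 hj).1; omega
        show (0 : ℝ) ≤ 1 - p j
        linarith [(hp j hj1).2])
      (fun j hj => by
        have hj1 : 1 ≤ j := by have := (Finset.mem_Icc.1 hj).1; omega
        show 1 - p j ≤ 1
        linarith [(hp j hj1).1])
    have hw' : 1 - ∑ j ∈ Finset.Icc R n, (1 - p j) ≤ ∏ j ∈ Finset.Icc R n, p j := by
      simpa using hw
    have hp2 : 1 / 2 ≤ ∏ j ∈ Finset.Icc R n, p j := by linarith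
    rw [hsplit]
    exact mul_le_mul_of_nonneg_left hp2 (le_of_lt hA)
  have hge := ge_of_tendsto hprod (Filter.eventually_atTop.2 ⟨R, hev⟩)
  nlinarith [hA]

end Final

/-- if `Π_{j≥1} p_j = 0`, then `S` acting on `l¹` has no eigenvalues. -/
theorem stmt16 (d : ℕ → ℕ) (p : ℕ → ℝ)
    (hd0 : d 0 = 1) (hd : ∀ j, 1 ≤ j → 2 ≤ d j)
    (hp : ∀ j, 1 ≤ j → p j ∈ Set.Ioc (0 : ℝ) 1)
    (hprod : Filter.Tendsto (fun n => ∏ j ∈ Finset.Icc 1 n, p j) Filter.atTop (nhds (0 : ℝ)))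
    (T1 : lp (fun _ : ℕ => ℂ) 1 →L[ℂ] lp (fun _ : ℕ => ℂ) 1)
    (hT1 : ∀ (w : lp (fun _ : ℕ => ℂ) 1) (n : ℕ),
      T1 w n = ∑' m : ℕ, (s d p n m : ℂ) * w m) :
    ¬ ∃ (lam : ℂ) (v : lp (fun _ : ℕ => ℂ) 1), v ≠ 0 ∧ T1 v = lam • v := by
  rintro ⟨lam, v, hv0, hveq⟩
  have hcoe : ∀ n : ℕ, lam * (v : ℕ → ℂ) n
      = (1 - (p 1 : ℂ)) * (v : ℕ → ℂ) n
        + (∏ j ∈ Finset.Icc 1 (zeta d n), (p j : ℂ)) * (v : ℕ → ℂ) (n + 1)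
        + ∑ r ∈ Finset.Icc 1 (zeta d n - 1),
            ((1 - (p (r + 1) : ℂ)) * ∏ j ∈ Finset.Icc 1 r, (p j : ℂ))
              * (v : ℕ → ℂ) (n - (q d r - 1)) := by
    intro n
    have h1 : (T1 v : ℕ → ℂ) n = lam * (v : ℕ → ℂ) n := by
      rw [hveq, lp.coeFn_smul]
      simp
    rw [← h1, hT1 v n, s_mul_tsum hd0 hd n]
  have hform : ∀ n : ℕ, (v : ℕ → ℂ) n = vlam d p lam n * (v : ℕ → ℂ) 0 := by
    intro n
    induction n using Nat.strong_induction_on with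
    | _ n IH =>
      cases n with
      | zero => rw [vlam_zero hd0 hd, one_mul]
      | succ m =>
        have hPk : (∏ j ∈ Finset.Icc 1 (zeta d m), (p j : ℂ)) ≠ 0 :=
          Finset.prod_ne_zero_iff.2 fun j hj => by
            exact_mod_cast ne_of_gt (hp j (Finset.mem_Icc.1 hj).1).1
        refine mul_left_cancel₀ hPk ?_
        have h1 := hcoe m
        have h2 := key_identity hd0 hd hp lam m
        rw [IH m (by omega)] at h1
        have hsum : ∑ r ∈ Finset.Icc 1 (zeta d m - 1),
            ((1 - (p (r + 1) : ℂ)) * ∏ j ∈ Finset.Icc 1 r, (p j : ℂ))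
              * (v : ℕ → ℂ) (m - (q d r - 1))
            = (∑ r ∈ Finset.Icc 1 (zeta d m - 1),
                ((1 - (p (r + 1) : ℂ)) * ∏ j ∈ Finset.Icc 1 r, (p j : ℂ))
                  * vlam d p lam (m - (q d r - 1))) * (v : ℕ → ℂ) 0 := by
          rw [Finset.sum_mul]
          exact Finset.sum_congr rfl fun r hr => by
            rw [IH (m - (q d r - 1)) (by omega)]; ring
        rw [hsum] at h1
        linear_combination (v : ℕ → ℂ) 0 * h2 - h1
  have hv00 : (v : ℕ → ℂ) 0 ≠ 0 := by
    intro h0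
    apply hv0
    refine lp.ext (funext fun n => ?_)
    have hz : (v : ℕ → ℂ) n = 0 := by rw [hform n, h0, mul_zero]
    simpa using hz
  have hvq : ∀ r : ℕ, (v : ℕ → ℂ) (q d r) = iota d p lam (r + 1) * (v : ℕ → ℂ) 0 := by
    intro r
    rw [hform (q d r)]
    congr 1
    rw [vlam_eq_prod hd0 hd p lam (le_refl (q d r))]
    have hdig : digit d (q d r) (r + 1) = 1 := by
      unfold digit
      simp only [Nat.add_sub_cancel]
      rw [Nat.div_self (q_pos hd0 hd r)]
      exact Nat.mod_eq_of_lt (by have := hd (r + 1) (by omega); omega)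
    have hmain : ∏ r' ∈ Finset.range (q d r),
        iota d p lam (r' + 1) ^ digit d (q d r) (r' + 1)
        = iota d p lam (r + 1) ^ digit d (q d r) (r + 1) := by
      refine Finset.prod_eq_single r (fun b hb hbr => ?_) (fun hr => ?_)
      · rcases lt_or_gt_of_ne hbr with hlt | hgt
        · rw [digit_eq_zero_of_dvd hd0 hd (show 1 ≤ b + 1 by omega)
            (show b + 1 ≤ r by omega) dvd_rfl, pow_zero]
        · rw [digit_eq_zero_of_lt
            (show q d r < q d (b + 1 - 1) by
              simpa using (q_strictMono hd0 hd) (show r < b from hgt)), pow_zero]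
      · exact absurd (Finset.mem_range.2 (lt_q hd0 hd r)) hr
    rw [hmain, hdig, pow_one]
  have hsumm : Summable fun n : ℕ => ‖(v : ℕ → ℂ) n‖ := by
    have h := (lp.memℓp v).summable (by norm_num : 0 < (1 : ℝ≥0∞).toReal)
    simpa using h
  have hsumi : Summable fun r : ℕ => ‖iota d p lam (r + 1)‖ := by
    have h1 : Summable fun r : ℕ => ‖(v : ℕ → ℂ) (q d r)‖ :=
      hsumm.comp_injective (q_strictMono hd0 hd).injective
    have h2 : (fun r : ℕ => ‖(v : ℕ → ℂ) (q d r)‖)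
        = fun r => ‖iota d p lam (r + 1)‖ * ‖(v : ℕ → ℂ) 0‖ := by
      funext r
      rw [hvq r, norm_mul]
    rw [h2] at h1
    exact (summable_mul_right_iff (norm_ne_zero_iff.2 hv00)).1 h1
  exact no_eig_contra hd0 hd hp hprod lam hsumi


end AMFC
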